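/- Quantum dilogarithm conjugation identity (the identity realizing the automorphism part μ# of a quantum cluster mutation): let u, x ∈ A and let m ≥ 1 be an integer. (i) If u·x = q^{2m}·x·u, then Ψ_q^{(1)}(u) · x · Ψ_q^{(1)}(u)⁻¹ = x · ∏_{r=1}^{m}(1 + q^{2r−1}·T·u)⁻¹ in A[[T]]. (ii) If u·x = q^{−2m}·x·u, then Ψ_q^{(1)}(u) · x · Ψ_q^{(1)}(u)⁻¹ = x · ∏_{r=1}^{m}(1 + q^{1−2r}·T·u) in A[[T]]. -/

import Mathlib

open PowerSeries

section QDilAux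

variable {K : Type*} [Field K] {A : Type*} [Ring A] [Algebra K A]

/-- coefficient of the quantum dilogarithm -/
noncomputable def qdc (q : K) (n : ℕ) : K :=
  q ^ (n ^ 2) / ∏ k ∈ Finset.Icc 1 n, (1 - q ^ (2 * k))

/-- scaled quantum dilogarithm series -/
noncomputable def qdF (q : K) (u : A) (l : K) : PowerSeries A :=
  PowerSeries.mk fun n => (qdc q n * l ^ n) • u ^ n

lemma qdc_rec (q : K) (hq : ∀ n : ℕ, 1 ≤ n → q ^ n ≠ 1) (n : ℕ) :
    qdc q (n + 1) * q ^ (2 * (n + 1)) + q ^ (2 * n + 1) * qdc q n = qdc q (n + 1) := by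
  have hD : (∏ k ∈ Finset.Icc 1 n, (1 - q ^ (2 * k))) ≠ 0 := by
    rw [Finset.prod_ne_zero_iff]
    intro k hk
    have hk1 : 1 ≤ k := (Finset.mem_Icc.mp hk).1
    have : q ^ (2 * k) ≠ 1 := hq (2 * k) (by omega)
    intro h
    exact this (sub_eq_zero.mp h).symm
  have hd : (1 - q ^ (2 * (n + 1))) ≠ 0 := by
    have : q ^ (2 * (n + 1)) ≠ 1 := hq _ (by omega)
    intro h
    exact this (sub_eq_zero.mp h).symm
  unfold qdc
  rw [Finset.prod_Icc_succ_top (by omega : 1 ≤ n + 1)]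
  have hpow : (n + 1) ^ 2 = 2 * n + 1 + n ^ 2 := by ring
  rw [hpow, pow_add]
  field_simp
  ring

lemma qdF_step (q : K) (hq : ∀ n : ℕ, 1 ≤ n → q ^ n ≠ 1) (u : A) (l : K) :
    ((1 : PowerSeries A) + (q * l) • (PowerSeries.X * PowerSeries.C u)) *
      qdF q u (q ^ 2 * l) = qdF q u l := by
  ext n
  rw [add_mul, one_mul, smul_mul_assoc, mul_assoc, map_add, PowerSeries.coeff_smul]
  cases n with
  | zero =>
      simp [qdF, coeff_zero_X_mul]
  | succ n =>
      rw [coeff_succ_X_mul, coeff_C_mul]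
      simp only [qdF, coeff_mk]
      rw [mul_smul_comm, ← pow_succ', smul_smul, ← add_smul]
      congr 1
      have h := qdc_rec q hq n
      have e1 : (q ^ 2 * l) ^ (n + 1) = q ^ (2 * (n + 1)) * l ^ (n + 1) := by
        rw [mul_pow, ← pow_mul]
      have e2 : (q ^ 2 * l) ^ n = q ^ (2 * n) * l ^ n := by
        rw [mul_pow, ← pow_mul]
      rw [e1, e2]
      calc qdc q (n + 1) * (q ^ (2 * (n + 1)) * l ^ (n + 1)) +
            q * l * (qdc q n * (q ^ (2 * n) * l ^ n))
          = (qdc q (n + 1) * q ^ (2 * (n + 1)) + q ^ (2 * n + 1) * qdc q n) * l ^ (n + 1) := by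
            rw [pow_add, pow_succ]; ring
        _ = qdc q (n + 1) * l ^ (n + 1) := by rw [h]

lemma upow_mul_comm {u x : A} {s : K} (h : u * x = s • (x * u)) (n : ℕ) :
    u ^ n * x = s ^ n • (x * u ^ n) := by
  induction n with
  | zero => simp
  | succ n ih =>
      rw [pow_succ', mul_assoc, ih, mul_smul_comm, ← mul_assoc, h, smul_mul_assoc,
        smul_smul, ← pow_succ, mul_assoc, ← pow_succ']

lemma qdF_mul_C {q : K} {u x : A} {s : K} (h : u * x = s • (x * u)) (l : K) :
    qdF q u l * PowerSeries.C x = PowerSeries.C x * qdF q u (s * l) := by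
  ext n
  rw [PowerSeries.coeff_mul_C, PowerSeries.coeff_C_mul]
  simp only [qdF, coeff_mk]
  rw [smul_mul_assoc, upow_mul_comm h n, smul_smul, mul_smul_comm]
  congr 1
  rw [mul_pow]
  ring

lemma commute_factor (a b : K) (Z : PowerSeries A) :
    Commute ((1 : PowerSeries A) + a • Z) (1 + b • Z) := by
  have h : Commute (a • Z) (b • Z) := by
    unfold Commute SemiconjBy
    rw [smul_mul_assoc, smul_mul_assoc, mul_smul_comm, mul_smul_comm,
      smul_smul, smul_smul, mul_comm a b]
  exact (Commute.one_left _).add_left ((Commute.one_right _).add_right h)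

lemma qdF_prodG (q : K) (hq : ∀ n : ℕ, 1 ≤ n → q ^ n ≠ 1) (u : A) (m : ℕ) :
    ((List.range m).map fun r =>
        (1 : PowerSeries A) + (q ^ (2 * r + 1)) • (PowerSeries.X * PowerSeries.C u)).prod *
      qdF q u (q ^ (2 * m)) = qdF q u 1 := by
  induction m with
  | zero => simp
  | succ m ih =>
      rw [List.range_succ, List.map_append, List.prod_append, List.map_singleton,
        List.prod_singleton, mul_assoc]
      have e1 : q ^ (2 * m + 1) = q * q ^ (2 * m) := pow_succ' q (2 * m)
      have e2 : q ^ (2 * (m + 1)) = q ^ 2 * q ^ (2 * m) := by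
        rw [← pow_add]; congr 1; ring
      rw [e1, e2, qdF_step q hq u (q ^ (2 * m)), ih]

lemma qdF_prodH (q : K) (hq0 : q ≠ 0) (hq : ∀ n : ℕ, 1 ≤ n → q ^ n ≠ 1) (u : A) (m : ℕ) :
    qdF q u ((q ^ (2 * m))⁻¹) =
      ((List.range m).map fun r =>
        (1 : PowerSeries A) + (q ^ (2 * r + 1))⁻¹ • (PowerSeries.X * PowerSeries.C u)).prod *
      qdF q u 1 := by
  induction m with
  | zero => simp
  | succ m ih =>
      have e1 : (q ^ (2 * m + 1))⁻¹ = q * (q ^ (2 * (m + 1)))⁻¹ := by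
        field_simp
        ring
      have e2 : (q ^ (2 * m))⁻¹ = q ^ 2 * (q ^ (2 * (m + 1)))⁻¹ := by
        field_simp
        ring
      have step := qdF_step q hq u ((q ^ (2 * (m + 1)))⁻¹)
      rw [← e2, ← e1] at step
      rw [← step, ih, List.range_succ, List.map_append, List.prod_append,
        List.map_singleton, List.prod_singleton, ← mul_assoc]
      congr 1
      have hcomm : Commute ((1 : PowerSeries A) +
          (q ^ (2 * m + 1))⁻¹ • (PowerSeries.X * PowerSeries.C u))
          (((List.range m).map fun r =>
            (1 : PowerSeries A) + (q ^ (2 * r + 1))⁻¹ • (PowerSeries.X * PowerSeries.C u)).prod) := by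
        apply Commute.list_prod_right
        intro y hy
        simp only [List.mem_map, List.mem_range] at hy
        obtain ⟨r, _, rfl⟩ := hy
        exact commute_factor _ _ _
      exact hcomm.eq

lemma isUnit_of_constantCoeff_one {f : PowerSeries A}
    (h : PowerSeries.constantCoeff f = 1) : IsUnit f := by
  rw [PowerSeries.isUnit_iff_constantCoeff, h]
  exact isUnit_one

lemma constantCoeff_qdF (q : K) (u : A) (l : K) :
    PowerSeries.constantCoeff (qdF q u l) = 1 := by
  rw [← PowerSeries.coeff_zero_eq_constantCoeff_apply]
  simp [qdF, qdc]

lemma constantCoeff_factor (a : K) (u : A) :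
    PowerSeries.constantCoeff
      ((1 : PowerSeries A) + a • (PowerSeries.X * PowerSeries.C u)) = 1 := by
  rw [← PowerSeries.coeff_zero_eq_constantCoeff_apply]
  rw [map_add, PowerSeries.coeff_smul]
  simp

end QDilAux

/-- The formal quantum dilogarithm series
`Ψ_p⁽ᵐ⁾(a) = Σ_{n≥0} (p^{n²} / ∏_{k=1}^{n}(1 − p^{2k})) aⁿ T^{mn}`
in the formal power series ring `A[[T]]`. -/
noncomputable def Psi {K : Type*} [Field K] (A : Type*) [Ring A] [Algebra K A]
    (p : K) (m : ℕ) (a : A) : PowerSeries A :=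
  PowerSeries.mk fun n =>
    if m ∣ n then
      (p ^ ((n / m) ^ 2) / ∏ k ∈ Finset.Icc 1 (n / m), (1 - p ^ (2 * k))) • a ^ (n / m)
    else 0

lemma Psi_eq_qdF {K : Type*} [Field K] {A : Type*} [Ring A] [Algebra K A]
    (q : K) (u : A) : Psi A q 1 u = qdF q u 1 := by
  ext n
  simp [Psi, qdF, qdc, Nat.div_one]

/-- quantum dilogarithm conjugation identity, realizing the
automorphism part of a quantum cluster mutation:
(i) if `u·x = q^{2m}·x·u` then `Ψ_q⁽¹⁾(u)·x·Ψ_q⁽¹⁾(u)⁻¹ = x·∏_{r=1}^{m}(1 + q^{2r−1}·T·u)⁻¹`;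
(ii) if `u·x = q^{−2m}·x·u` then `Ψ_q⁽¹⁾(u)·x·Ψ_q⁽¹⁾(u)⁻¹ = x·∏_{r=1}^{m}(1 + q^{1−2r}·T·u)`. -/
theorem quantum_dilogarithm_conjugation
    {K : Type*} [Field K] (q : K) (hq0 : q ≠ 0) (hq : ∀ n : ℕ, 1 ≤ n → q ^ n ≠ 1)
    {A : Type*} [Ring A] [Algebra K A]
    (u x : A) (m : ℕ) (hm : 1 ≤ m) :
    (u * x = (q ^ (2 * m)) • (x * u) →
      Psi A q 1 u * PowerSeries.C x * Ring.inverse (Psi A q 1 u)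
        = PowerSeries.C x *
            Ring.inverse (((List.range m).map fun r =>
              (1 : PowerSeries A) + (q ^ (2 * r + 1)) • (PowerSeries.X * PowerSeries.C u)).prod)) ∧
    (u * x = ((q ^ (2 * m))⁻¹) • (x * u) →
      Psi A q 1 u * PowerSeries.C x * Ring.inverse (Psi A q 1 u)
        = PowerSeries.C x *
            ((List.range m).map fun r =>
              (1 : PowerSeries A) + ((q ^ (2 * r + 1))⁻¹) • (PowerSeries.X * PowerSeries.C u)).prod) := by
  have hPsiU : IsUnit (Psi A q 1 u) := by
    rw [Psi_eq_qdF]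
    exact isUnit_of_constantCoeff_one (constantCoeff_qdF q u 1)
  have hPsiInv : Psi A q 1 u * Ring.inverse (Psi A q 1 u) = 1 :=
    Ring.mul_inverse_cancel _ hPsiU
  constructor
  · intro h
    have hc : qdF q u 1 * PowerSeries.C x = PowerSeries.C x * qdF q u (q ^ (2 * m)) := by
      have := qdF_mul_C (q := q) h 1
      rwa [mul_one] at this
    set P := ((List.range m).map fun r =>
      (1 : PowerSeries A) + (q ^ (2 * r + 1)) • (PowerSeries.X * PowerSeries.C u)).prod with hP
    have hPunit : IsUnit P := by
      apply isUnit_of_constantCoeff_one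
      rw [hP, map_list_prod]
      rw [List.map_map]
      apply List.prod_eq_one
      intro a ha
      simp only [List.mem_map, List.mem_range, Function.comp] at ha
      obtain ⟨r, _, rfl⟩ := ha
      exact constantCoeff_factor _ u
    have hG : P * qdF q u (q ^ (2 * m)) = qdF q u 1 := qdF_prodG q hq u m
    have hF : qdF q u (q ^ (2 * m)) = Ring.inverse P * qdF q u 1 := by
      rw [← hG, ← mul_assoc, Ring.inverse_mul_cancel _ hPunit, one_mul]
    rw [Psi_eq_qdF] at hPsiInv ⊢
    rw [hc, hF, mul_assoc, mul_assoc, hPsiInv, mul_one]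
  · intro h
    have hc : qdF q u 1 * PowerSeries.C x = PowerSeries.C x * qdF q u ((q ^ (2 * m))⁻¹) := by
      have := qdF_mul_C (q := q) h 1
      rwa [mul_one] at this
    have hH := qdF_prodH q hq0 hq u m
    rw [Psi_eq_qdF] at hPsiInv ⊢
    rw [hc, hH, mul_assoc, mul_assoc, hPsiInv, mul_one]
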